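/- Let c > 0. In ℝ², let J be the 2×2 all-ones matrix, Σ₁ = diag(c+1, 1) + J, Σ₂ = diag(1, c+1) + J, and let q_{Σ₁}, q_{Σ₂} be top eigenvectors of Σ₁ and Σ₂, each chosen with nonnegative coordinates. Let u₁ = (1/√2)(1,1)ᵀ, u₂ = (1/√2)(1,−1)ᵀ, and let B ∈ ℝ^{2×2} be the symmetric matrix with eigenvector u₁ of eigenvalue α and eigenvector u₂ of eigenvalue β, where α² > β² > 0. Then cos(B q_{Σ₁}, B q_{Σ₂}) = (2 + γ√(c² + 4)) / (2γ + √(c² + 4)) with γ = (α² − β²)/(α² + β²), and moreover cos(B q_{Σ₁}, B q_{Σ₂}) > cos(q_{Σ₁}, q_{Σ₂}) = 2/√(4 + c²). -/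

import Mathlib

open Matrix

/-- Cosine similarity of two vectors in `ℝ^n` (with respect to the standard dot product). -/
noncomputable def cosSim {n : ℕ} (u v : Fin n → ℝ) : ℝ :=
  (u ⬝ᵥ v) / (Real.sqrt (u ⬝ᵥ u) * Real.sqrt (v ⬝ᵥ v))

private lemma aux_div (aa bb N s1 s2 : ℝ) (ha : aa ≠ 0) (hb : bb ≠ 0) :
    (aa * (bb * N)) / ((aa * s1) * (bb * s2)) = N / (s1 * s2) := by
  rcases eq_or_ne s1 0 with h | h
  · simp [h]
  rcases eq_or_ne s2 0 with h2 | h2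
  · simp [h2]
  field_simp

private lemma cosSim_smul_smul {a b : ℝ} (ha : 0 < a) (hb : 0 < b) (u v : Fin 2 → ℝ) :
    cosSim (a • u) (b • v) = cosSim u v := by
  unfold cosSim
  rw [smul_dotProduct, dotProduct_smul, smul_dotProduct, dotProduct_smul,
      smul_dotProduct, dotProduct_smul]
  simp only [smul_eq_mul]
  rw [show a * (a * (u ⬝ᵥ u)) = a ^ 2 * (u ⬝ᵥ u) from by ring,
      show b * (b * (v ⬝ᵥ v)) = b ^ 2 * (v ⬝ᵥ v) from by ring,
      Real.sqrt_mul (sq_nonneg a), Real.sqrt_mul (sq_nonneg b),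
      Real.sqrt_sq ha.le, Real.sqrt_sq hb.le]
  exact aux_div a b _ _ _ (ne_of_gt ha) (ne_of_gt hb)

/-- eigenpair extraction for the matrix `[[c+2,1],[1,2]]`. -/
private lemma key (c s l x y : ℝ) (hc : 0 < c) (hs2 : s ^ 2 = c ^ 2 + 4) (hs0 : 0 < s)
    (e0 : (c + 2) * x + y = l * x) (e1 : x + 2 * y = l * y)
    (hx : 0 ≤ x) (hy : 0 ≤ y) (hne : ¬(x = 0 ∧ y = 0))
    (htop : (c + 4 + s) / 2 ≤ l) :
    0 < x ∧ y = (s - c) / 2 * x := by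
  have hxpos : 0 < x := by
    rcases hx.lt_or_eq with h | h
    · exact h
    · exfalso
      have hx0 : x = 0 := h.symm
      have hy0 : y = 0 := by rw [hx0] at e0; linarith
      exact hne ⟨hx0, hy0⟩
  have hyx : y = (l - (c + 2)) * x := by linarith [e0]
  have hquad : (l ^ 2 - (c + 4) * l + (2 * c + 3)) * x = 0 := by
    rw [hyx] at e1
    linear_combination -e1
  have hquad0 : l ^ 2 - (c + 4) * l + (2 * c + 3) = 0 :=
    (mul_eq_zero.mp hquad).resolve_right (ne_of_gt hxpos)
  have hfac : (l - (c + 4 + s) / 2) * (l - (c + 4 - s) / 2) = 0 := by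
    linear_combination hquad0 - (1 / 4 : ℝ) * hs2
  have hl : l = (c + 4 + s) / 2 := by
    rcases mul_eq_zero.mp hfac with h | h
    · linarith
    · exfalso; nlinarith
  refine ⟨hxpos, ?_⟩
  rw [hyx, hl]; ring

set_option maxHeartbeats 1600000 in
theorem stmt5 (c : ℝ) (hc : 0 < c)
    (S₁ S₂ : Matrix (Fin 2) (Fin 2) ℝ)
    (hS₁ : S₁ = Matrix.diagonal ![c + 1, 1] + !![1, 1; 1, 1])
    (hS₂ : S₂ = Matrix.diagonal ![1, c + 1] + !![1, 1; 1, 1])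
    (q₁ q₂ : Fin 2 → ℝ) (l₁ l₂ : ℝ)
    (hq₁ : q₁ ≠ 0) (hq₂ : q₂ ≠ 0)
    (hq₁pos : ∀ i, 0 ≤ q₁ i) (hq₂pos : ∀ i, 0 ≤ q₂ i)
    (he₁ : S₁.mulVec q₁ = l₁ • q₁) (he₂ : S₂.mulVec q₂ = l₂ • q₂)
    (htop₁ : ∀ (μ : ℝ) (v : Fin 2 → ℝ), v ≠ 0 → S₁.mulVec v = μ • v → μ ≤ l₁)
    (htop₂ : ∀ (μ : ℝ) (v : Fin 2 → ℝ), v ≠ 0 → S₂.mulVec v = μ • v → μ ≤ l₂)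
    (B : Matrix (Fin 2) (Fin 2) ℝ) (α β : ℝ)
    (hBsymm : Bᵀ = B)
    (hBu₁ : B.mulVec ((Real.sqrt 2)⁻¹ • ![1, 1]) = α • ((Real.sqrt 2)⁻¹ • ![1, 1]))
    (hBu₂ : B.mulVec ((Real.sqrt 2)⁻¹ • ![1, -1]) = β • ((Real.sqrt 2)⁻¹ • ![1, -1]))
    (hαβ : β ^ 2 < α ^ 2) (hβ : 0 < β ^ 2) :
    cosSim (B.mulVec q₁) (B.mulVec q₂) =
        (2 + (α ^ 2 - β ^ 2) / (α ^ 2 + β ^ 2) * Real.sqrt (c ^ 2 + 4)) /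
          (2 * ((α ^ 2 - β ^ 2) / (α ^ 2 + β ^ 2)) + Real.sqrt (c ^ 2 + 4)) ∧
      cosSim q₁ q₂ < cosSim (B.mulVec q₁) (B.mulVec q₂) ∧
      cosSim q₁ q₂ = 2 / Real.sqrt (4 + c ^ 2) := by
  have hs2 : (Real.sqrt (c ^ 2 + 4)) ^ 2 = c ^ 2 + 4 := Real.sq_sqrt (by positivity)
  have hs0 : 0 < Real.sqrt (c ^ 2 + 4) := Real.sqrt_pos.mpr (by positivity)
  set s : ℝ := Real.sqrt (c ^ 2 + 4) with hs_def
  have hc2 : 0 < c ^ 2 := by positivity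
  have hs_gt2 : 2 < s := by
    rw [hs_def]
    exact (Real.lt_sqrt (by norm_num)).mpr (by linarith)
  have hs_gtc : c < s := by
    rw [hs_def]
    exact (Real.lt_sqrt hc.le).mpr (by linarith)
  set t : ℝ := (s - c) / 2 with ht_def
  have ht_pos : 0 < t := by rw [ht_def]; linarith
  have ht_lt1 : t < 1 := by
    have hslt : s < c + 2 := by
      rw [hs_def]
      exact (Real.sqrt_lt' (by linarith)).mpr (by nlinarith)
    rw [ht_def]; linarith
  have hts : 1 + t ^ 2 = t * s := by
    rw [ht_def]; linear_combination (-1 / 4 : ℝ) * hs2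
  -- eigen equations
  have e10 := congr_fun he₁ 0
  have e11 := congr_fun he₁ 1
  simp [hS₁, Matrix.mulVec, dotProduct, Fin.sum_univ_two, Matrix.diagonal_apply,
    Matrix.cons_val_zero, Matrix.cons_val_one, Matrix.head_cons] at e10 e11
  have e20 := congr_fun he₂ 0
  have e21 := congr_fun he₂ 1
  simp [hS₂, Matrix.mulVec, dotProduct, Fin.sum_univ_two, Matrix.diagonal_apply,
    Matrix.cons_val_zero, Matrix.cons_val_one, Matrix.head_cons] at e20 e21
  -- top eigenvalue lower bounds
  have hvec1 : S₁.mulVec ![1, t] = ((c + 4 + s) / 2) • ![1, t] := by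
    funext i
    fin_cases i
    · simp only [hS₁, Matrix.mulVec, dotProduct, Fin.sum_univ_two, Matrix.add_apply,
        Matrix.diagonal_apply, Fin.isValue, Pi.smul_apply, smul_eq_mul]
      norm_num [ht_def]
      ring
    · simp only [hS₁, Matrix.mulVec, dotProduct, Fin.sum_univ_two, Matrix.add_apply,
        Matrix.diagonal_apply, Fin.isValue, Pi.smul_apply, smul_eq_mul]
      norm_num [ht_def]
      linear_combination (-1 / 4 : ℝ) * hs2
  have hvec2 : S₂.mulVec ![t, 1] = ((c + 4 + s) / 2) • ![t, 1] := by
    funext i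
    fin_cases i
    · simp only [hS₂, Matrix.mulVec, dotProduct, Fin.sum_univ_two, Matrix.add_apply,
        Matrix.diagonal_apply, Fin.isValue, Pi.smul_apply, smul_eq_mul]
      norm_num [ht_def]
      linear_combination (-1 / 4 : ℝ) * hs2
    · simp only [hS₂, Matrix.mulVec, dotProduct, Fin.sum_univ_two, Matrix.add_apply,
        Matrix.diagonal_apply, Fin.isValue, Pi.smul_apply, smul_eq_mul]
      norm_num [ht_def]
      ring
  have hvne1 : (![1, t] : Fin 2 → ℝ) ≠ 0 := by
    intro h
    have := congr_fun h 0
    simp at this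
  have hvne2 : (![t, 1] : Fin 2 → ℝ) ≠ 0 := by
    intro h
    have := congr_fun h 1
    simp at this
  have htop1' : (c + 4 + s) / 2 ≤ l₁ := htop₁ _ _ hvne1 hvec1
  have htop2' : (c + 4 + s) / 2 ≤ l₂ := htop₂ _ _ hvne2 hvec2
  have hne1 : ¬(q₁ 0 = 0 ∧ q₁ 1 = 0) := by
    rintro ⟨h0, h1⟩
    apply hq₁
    funext i
    fin_cases i <;> simpa
  have hne2 : ¬(q₂ 1 = 0 ∧ q₂ 0 = 0) := by
    rintro ⟨h1, h0⟩
    apply hq₂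
    funext i
    fin_cases i <;> simpa
  obtain ⟨hx1, hy1⟩ := key c s l₁ (q₁ 0) (q₁ 1) hc hs2 hs0
    (by linarith [e10]) (by linarith [e11]) (hq₁pos 0) (hq₁pos 1) hne1 htop1'
  obtain ⟨hx2, hy2⟩ := key c s l₂ (q₂ 1) (q₂ 0) hc hs2 hs0
    (by linarith [e21]) (by linarith [e20]) (hq₂pos 1) (hq₂pos 0) hne2 htop2'
  -- q₁ and q₂ as scalar multiples
  set x1 : ℝ := q₁ 0 with hx1def
  set x2 : ℝ := q₂ 1 with hx2def
  have hq₁eq : q₁ = x1 • ![1, t] := by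
    funext i
    fin_cases i <;> simp [hx1def, hy1, ht_def] <;> ring
  have hq₂eq : q₂ = x2 • ![t, 1] := by
    funext i
    fin_cases i <;> simp [hx2def, hy2, ht_def] <;> ring
  -- B entries
  have hsne : (Real.sqrt 2)⁻¹ ≠ 0 := by positivity
  rw [Matrix.mulVec_smul, smul_comm α] at hBu₁
  rw [Matrix.mulVec_smul, smul_comm β] at hBu₂
  have hB1 : B.mulVec ![1, 1] = α • ![1, 1] := smul_right_injective (Fin 2 → ℝ) hsne hBu₁
  have hB2 : B.mulVec ![1, -1] = β • ![1, -1] := smul_right_injective (Fin 2 → ℝ) hsne hBu₂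
  have a0 := congr_fun hB1 0
  have a1 := congr_fun hB1 1
  have b0 := congr_fun hB2 0
  have b1 := congr_fun hB2 1
  simp [Matrix.mulVec, dotProduct, Fin.sum_univ_two] at a0 a1 b0 b1
  set p : ℝ := ((α + β) + t * (α - β)) / 2 with hp_def
  set q : ℝ := ((α - β) + t * (α + β)) / 2 with hq_def
  have hBp : B.mulVec ![1, t] = ![p, q] := by
    funext i
    fin_cases i
    · simp [Matrix.mulVec, dotProduct, Fin.sum_univ_two, hp_def]
      linear_combination ((1 + t) / 2) * a0 + ((1 - t) / 2) * b0
    · simp [Matrix.mulVec, dotProduct, Fin.sum_univ_two, hq_def]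
      linear_combination ((1 + t) / 2) * a1 + ((1 - t) / 2) * b1
  have hBq : B.mulVec ![t, 1] = ![q, p] := by
    funext i
    fin_cases i
    · simp [Matrix.mulVec, dotProduct, Fin.sum_univ_two, hq_def]
      linear_combination ((t + 1) / 2) * a0 + ((t - 1) / 2) * b0
    · simp [Matrix.mulVec, dotProduct, Fin.sum_univ_two, hp_def]
      linear_combination ((t + 1) / 2) * a1 + ((t - 1) / 2) * b1
  -- images under B
  have hBq₁ : B.mulVec q₁ = x1 • ![p, q] := by
    rw [hq₁eq, Matrix.mulVec_smul, hBp]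
  have hBq₂ : B.mulVec q₂ = x2 • ![q, p] := by
    rw [hq₂eq, Matrix.mulVec_smul, hBq]
  -- cosSim computations
  have hcosB : cosSim (B.mulVec q₁) (B.mulVec q₂) = cosSim ![p, q] ![q, p] := by
    rw [hBq₁, hBq₂]
    exact cosSim_smul_smul hx1 hx2 _ _
  have hcosq : cosSim q₁ q₂ = cosSim ![1, t] ![t, 1] := by
    rw [hq₁eq, hq₂eq]
    exact cosSim_smul_smul hx1 hx2 _ _
  -- value of cosSim q₁ q₂
  have hcosq_val : cosSim q₁ q₂ = 2 / s := by
    rw [hcosq]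
    unfold cosSim
    simp only [dotProduct, Fin.sum_univ_two, Matrix.cons_val_zero, Matrix.cons_val_one,
      Matrix.head_cons]
    rw [show t * t + 1 * 1 = 1 * 1 + t * t from by ring, Real.mul_self_sqrt (by positivity)]
    rw [show 1 * 1 + t * t = t * s from by linear_combination hts]
    rw [show (1 : ℝ) * t + t * 1 = 2 * t from by ring]
    rw [mul_comm t s, mul_div_mul_right _ _ (ne_of_gt ht_pos)]
  -- value of cosSim (B q₁) (B q₂)
  have hppqq : p * p + q * q = t * (s * (α ^ 2 + β ^ 2) + 2 * (α ^ 2 - β ^ 2)) / 2 := by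
    rw [hp_def, hq_def]
    linear_combination ((α ^ 2 + β ^ 2) / 2) * hts
  have hpq : p * q + q * p = t * (s * (α ^ 2 - β ^ 2) + 2 * (α ^ 2 + β ^ 2)) / 2 := by
    rw [hp_def, hq_def]
    linear_combination ((α ^ 2 - β ^ 2) / 2) * hts
  have hG : 0 < α ^ 2 - β ^ 2 := by linarith
  have hA : 0 < α ^ 2 + β ^ 2 := by linarith
  have hden_pos : 0 < t * (s * (α ^ 2 + β ^ 2) + 2 * (α ^ 2 - β ^ 2)) / 2 := by positivity
  have hcosB_val : cosSim (B.mulVec q₁) (B.mulVec q₂) =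
      (s * (α ^ 2 - β ^ 2) + 2 * (α ^ 2 + β ^ 2)) /
        (s * (α ^ 2 + β ^ 2) + 2 * (α ^ 2 - β ^ 2)) := by
    rw [hcosB]
    unfold cosSim
    simp only [dotProduct, Fin.sum_univ_two, Matrix.cons_val_zero, Matrix.cons_val_one,
      Matrix.head_cons]
    rw [show q * q + p * p = p * p + q * q from by ring,
      Real.mul_self_sqrt (add_nonneg (mul_self_nonneg p) (mul_self_nonneg q))]
    rw [hpq, hppqq]
    have hden : s * (α ^ 2 + β ^ 2) + 2 * (α ^ 2 - β ^ 2) ≠ 0 := by positivity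
    have htne : t ≠ 0 := ne_of_gt ht_pos
    field_simp
  have hden1 : 0 < s * (α ^ 2 + β ^ 2) + 2 * (α ^ 2 - β ^ 2) := by positivity
  have hden2 : 0 < 2 * ((α ^ 2 - β ^ 2) / (α ^ 2 + β ^ 2)) + s := by positivity
  refine ⟨?_, ?_, ?_⟩
  · rw [hcosB_val, div_eq_div_iff (ne_of_gt hden1) (ne_of_gt hden2)]
    field_simp
    ring
  · rw [hcosq_val, hcosB_val, div_lt_div_iff₀ hs0 hden1]
    have hkey : (s * (α ^ 2 - β ^ 2) + 2 * (α ^ 2 + β ^ 2)) * s -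
        2 * (s * (α ^ 2 + β ^ 2) + 2 * (α ^ 2 - β ^ 2)) = c ^ 2 * (α ^ 2 - β ^ 2) := by
      linear_combination (α ^ 2 - β ^ 2) * hs2
    have hpos : 0 < c ^ 2 * (α ^ 2 - β ^ 2) := by positivity
    linarith
  · rw [hcosq_val, show (4 : ℝ) + c ^ 2 = c ^ 2 + 4 from by ring, ← hs_def]
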